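/- arXiv:0807.2338 — 8 statements merged into one kernel-verified Lean document; each statement's English description precedes it below -/
import Mathlib

section
/- Let C ∈ ℂ^{n×m}, let Ω ∈ ℂ^{m×m} be Hermitian, and set A = -(1/2)C†C - iΩ. For any ω ∈ ℝ, if the matrix (iωI_m - A) is invertible, then the transfer matrix Ξ(iω) = I_n - C (iωI_m - A)^{-1} C† is unitary. -/
open Matrix

theorem transfer_function_unitary_S_eq_one {n m : ℕ}
    (C : Matrix (Fin n) (Fin m) ℂ) (Ω : Matrix (Fin m) (Fin m) ℂ) (hΩ : Ωᴴ = Ω)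
    (A : Matrix (Fin m) (Fin m) ℂ)
    (hA : A = -((1 / 2 : ℂ) • (Cᴴ * C)) - Complex.I • Ω)
    (ω : ℝ) (hInv : IsUnit ((Complex.I * (ω : ℂ)) • (1 : Matrix (Fin m) (Fin m) ℂ) - A)) :
    ((1 : Matrix (Fin n) (Fin n) ℂ) -
        C * ((Complex.I * (ω : ℂ)) • (1 : Matrix (Fin m) (Fin m) ℂ) - A)⁻¹ * Cᴴ) *
      ((1 : Matrix (Fin n) (Fin n) ℂ) -
        C * ((Complex.I * (ω : ℂ)) • (1 : Matrix (Fin m) (Fin m) ℂ) - A)⁻¹ * Cᴴ)ᴴ = 1 ∧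
    ((1 : Matrix (Fin n) (Fin n) ℂ) -
        C * ((Complex.I * (ω : ℂ)) • (1 : Matrix (Fin m) (Fin m) ℂ) - A)⁻¹ * Cᴴ)ᴴ *
      ((1 : Matrix (Fin n) (Fin n) ℂ) -
        C * ((Complex.I * (ω : ℂ)) • (1 : Matrix (Fin m) (Fin m) ℂ) - A)⁻¹ * Cᴴ) = 1 := by
  set M : Matrix (Fin m) (Fin m) ℂ :=
    (Complex.I * (ω : ℂ)) • (1 : Matrix (Fin m) (Fin m) ℂ) - A with hM
  have hdet : IsUnit M.det := (Matrix.isUnit_iff_isUnit_det M).mp hInv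
  have hdetH : IsUnit Mᴴ.det := by
    rw [Matrix.det_conjTranspose]
    exact hdet.star
  have hAH : Aᴴ = -((1 / 2 : ℂ) • (Cᴴ * C)) + Complex.I • Ω := by
    rw [hA]
    simp [Matrix.conjTranspose_smul, hΩ, sub_eq_add_neg]
  have hstar : star (Complex.I * (ω : ℂ)) = -(Complex.I * (ω : ℂ)) := by
    simp [Complex.ext_iff]
  have hsum : M + Mᴴ = Cᴴ * C := by
    rw [hM, Matrix.conjTranspose_sub, Matrix.conjTranspose_smul, Matrix.conjTranspose_one,
      hAH, hA, hstar]
    module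
  have hMinv' : M * M⁻¹ = 1 := Matrix.mul_nonsing_inv M hdet
  have hMinv : M⁻¹ * M = 1 := Matrix.nonsing_inv_mul M hdet
  have hMHinv' : Mᴴ * Mᴴ⁻¹ = 1 := Matrix.mul_nonsing_inv _ hdetH
  have hMHinv : Mᴴ⁻¹ * Mᴴ = 1 := Matrix.nonsing_inv_mul _ hdetH
  have hconj : (M⁻¹)ᴴ = Mᴴ⁻¹ := Matrix.conjTranspose_nonsing_inv M
  have key1 : M⁻¹ * (Cᴴ * C) * Mᴴ⁻¹ = Mᴴ⁻¹ + M⁻¹ := by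
    rw [← hsum, mul_add, add_mul, Matrix.mul_assoc M⁻¹ Mᴴ, hMHinv', hMinv]
    simp [Matrix.mul_assoc]
  have key2 : Mᴴ⁻¹ * (Cᴴ * C) * M⁻¹ = M⁻¹ + Mᴴ⁻¹ := by
    rw [← hsum, mul_add, add_mul, Matrix.mul_assoc Mᴴ⁻¹ M, hMinv', hMHinv]
    simp [Matrix.mul_assoc]
    abel
  have hXY : (C * M⁻¹ * Cᴴ) * (C * Mᴴ⁻¹ * Cᴴ) = C * Mᴴ⁻¹ * Cᴴ + C * M⁻¹ * Cᴴ := by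
    have : (C * M⁻¹ * Cᴴ) * (C * Mᴴ⁻¹ * Cᴴ) = C * (M⁻¹ * (Cᴴ * C) * Mᴴ⁻¹) * Cᴴ := by
      simp only [Matrix.mul_assoc]
    rw [this, key1, Matrix.mul_add, Matrix.add_mul]
  have hYX : (C * Mᴴ⁻¹ * Cᴴ) * (C * M⁻¹ * Cᴴ) = C * M⁻¹ * Cᴴ + C * Mᴴ⁻¹ * Cᴴ := by
    have : (C * Mᴴ⁻¹ * Cᴴ) * (C * M⁻¹ * Cᴴ) = C * (Mᴴ⁻¹ * (Cᴴ * C) * M⁻¹) * Cᴴ := by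
      simp only [Matrix.mul_assoc]
    rw [this, key2, Matrix.mul_add, Matrix.add_mul]
  have hT : ((1 : Matrix (Fin n) (Fin n) ℂ) - C * M⁻¹ * Cᴴ)ᴴ = 1 - C * Mᴴ⁻¹ * Cᴴ := by
    simp [Matrix.conjTranspose_sub, Matrix.conjTranspose_mul, hconj, Matrix.mul_assoc]
  have expand : ∀ X Y : Matrix (Fin n) (Fin n) ℂ,
      ((1 : Matrix (Fin n) (Fin n) ℂ) - X) * (1 - Y) = 1 - X - Y + X * Y := by
    intro X Y
    noncomm_ring
  constructor
  · rw [hT, expand, hXY]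
    abel
  · rw [hT, expand, hYX]
    abel
end

section
/- Let C ∈ ℂ^{n×m}, Ω ∈ ℂ^{m×m} Hermitian, S ∈ ℂ^{n×n} unitary, and A = -(1/2)C†C - iΩ. For any ω ∈ ℝ with iωI_m - A invertible, the matrix Ξ(iω) = (I_n - C(iωI_m - A)^{-1}C†) S is unitary. -/
open Matrix

theorem transfer_function_unitary {n m : ℕ}
    (C : Matrix (Fin n) (Fin m) ℂ) (Ω : Matrix (Fin m) (Fin m) ℂ) (hΩ : Ωᴴ = Ω)
    (S : Matrix (Fin n) (Fin n) ℂ) (hS : S * Sᴴ = 1 ∧ Sᴴ * S = 1)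
    (A : Matrix (Fin m) (Fin m) ℂ)
    (hA : A = -((1 / 2 : ℂ) • (Cᴴ * C)) - Complex.I • Ω)
    (ω : ℝ) (hInv : IsUnit ((Complex.I * (ω : ℂ)) • (1 : Matrix (Fin m) (Fin m) ℂ) - A)) :
    (((1 : Matrix (Fin n) (Fin n) ℂ) -
        C * ((Complex.I * (ω : ℂ)) • (1 : Matrix (Fin m) (Fin m) ℂ) - A)⁻¹ * Cᴴ) * S) *
      (((1 : Matrix (Fin n) (Fin n) ℂ) -
        C * ((Complex.I * (ω : ℂ)) • (1 : Matrix (Fin m) (Fin m) ℂ) - A)⁻¹ * Cᴴ) * S)ᴴ = 1 ∧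
    (((1 : Matrix (Fin n) (Fin n) ℂ) -
        C * ((Complex.I * (ω : ℂ)) • (1 : Matrix (Fin m) (Fin m) ℂ) - A)⁻¹ * Cᴴ) * S)ᴴ *
      (((1 : Matrix (Fin n) (Fin n) ℂ) -
        C * ((Complex.I * (ω : ℂ)) • (1 : Matrix (Fin m) (Fin m) ℂ) - A)⁻¹ * Cᴴ) * S) = 1 := by
  set M : Matrix (Fin m) (Fin m) ℂ :=
    (Complex.I * (ω : ℂ)) • (1 : Matrix (Fin m) (Fin m) ℂ) - A with hM
  -- key: M + Mᴴ = Cᴴ * C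
  have hkey : M + Mᴴ = Cᴴ * C := by
    subst hA
    rw [hM]
    simp only [conjTranspose_sub, conjTranspose_smul, conjTranspose_neg, conjTranspose_one,
      conjTranspose_mul, conjTranspose_conjTranspose, hΩ]
    have h1 : star (Complex.I * (ω : ℂ)) = -(Complex.I * (ω : ℂ)) := by
      simp [Complex.ext_iff, mul_comm]
    have h2 : star ((1 : ℂ) / 2) = (1 / 2 : ℂ) := by
      simp [Complex.ext_iff]
    have h3 : star Complex.I = -Complex.I := Complex.conj_I
    rw [h1, h2, h3]
    module
  have hdet : IsUnit M.det := (Matrix.isUnit_iff_isUnit_det M).mp hInv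
  have hdetH : IsUnit Mᴴ.det := by
    rw [Matrix.det_conjTranspose]
    exact isUnit_star.mpr hdet
  have h1 : M * M⁻¹ = 1 := Matrix.mul_nonsing_inv M hdet
  have h2 : M⁻¹ * M = 1 := Matrix.nonsing_inv_mul M hdet
  have h3 : Mᴴ * (Mᴴ)⁻¹ = 1 := Matrix.mul_nonsing_inv _ hdetH
  have h4 : (Mᴴ)⁻¹ * Mᴴ = 1 := Matrix.nonsing_inv_mul _ hdetH
  have hct : (M⁻¹)ᴴ = (Mᴴ)⁻¹ := Matrix.conjTranspose_nonsing_inv M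
  set T : Matrix (Fin n) (Fin n) ℂ := 1 - C * M⁻¹ * Cᴴ with hT
  have hTH : Tᴴ = 1 - C * (Mᴴ)⁻¹ * Cᴴ := by
    simp [hT, conjTranspose_sub, conjTranspose_mul, hct, Matrix.mul_assoc]
  have key1 : T * Tᴴ = 1 := by
    rw [hTH, hT]
    have e1 : C * M⁻¹ * Cᴴ * (C * (Mᴴ)⁻¹ * Cᴴ)
        = C * M⁻¹ * Cᴴ + C * (Mᴴ)⁻¹ * Cᴴ := by
      have : C * M⁻¹ * Cᴴ * (C * (Mᴴ)⁻¹ * Cᴴ)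
          = C * (M⁻¹ * (M + Mᴴ) * (Mᴴ)⁻¹) * Cᴴ := by
        rw [hkey]; simp [Matrix.mul_assoc]
      rw [this, Matrix.mul_add, Matrix.add_mul, h2, Matrix.mul_assoc M⁻¹ Mᴴ (Mᴴ)⁻¹, h3,
        Matrix.mul_one, Matrix.one_mul]
      simp [Matrix.mul_add, Matrix.add_mul, add_comm]
    rw [Matrix.sub_mul, Matrix.mul_sub, Matrix.mul_sub, Matrix.one_mul, Matrix.one_mul,
      Matrix.mul_one, e1]
    noncomm_ring
  have key2 : Tᴴ * T = 1 := by
    rw [hTH, hT]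
    have e1 : C * (Mᴴ)⁻¹ * Cᴴ * (C * M⁻¹ * Cᴴ)
        = C * M⁻¹ * Cᴴ + C * (Mᴴ)⁻¹ * Cᴴ := by
      have : C * (Mᴴ)⁻¹ * Cᴴ * (C * M⁻¹ * Cᴴ)
          = C * ((Mᴴ)⁻¹ * (M + Mᴴ) * M⁻¹) * Cᴴ := by
        rw [hkey]; simp [Matrix.mul_assoc]
      rw [this, Matrix.mul_add, Matrix.add_mul, h4, Matrix.mul_assoc (Mᴴ)⁻¹ M M⁻¹, h1,
        Matrix.mul_one, Matrix.one_mul]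
      simp [Matrix.mul_add, Matrix.add_mul, add_comm]
    rw [Matrix.sub_mul, Matrix.mul_sub, Matrix.mul_sub, Matrix.one_mul, Matrix.one_mul,
      Matrix.mul_one, e1]
    noncomm_ring
  constructor
  · calc T * S * (T * S)ᴴ = T * (S * Sᴴ) * Tᴴ := by
          rw [conjTranspose_mul]; noncomm_ring
    _ = 1 := by rw [hS.1, Matrix.mul_one, key1]
  · calc (T * S)ᴴ * (T * S) = Sᴴ * (Tᴴ * T) * S := by
          rw [conjTranspose_mul]; noncomm_ring
    _ = 1 := by rw [key2, Matrix.mul_one, hS.2]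
end

section
/- Let C ∈ ℂ^{n×m}, let ε : ℝ → ℝ be a polynomial with real coefficients, set A = -(1/2)C†C - i·ε(C†C) and Ã = -(1/2)CC† - i·ε(CC†) (functional calculus on the Hermitian matrices C†C, CC†). Then for every s ∈ ℂ with both sI_m - A and sI_n - Ã invertible, the transfer matrix Ξ(s) = I_n - C(sI_m - A)^{-1}C† satisfies (sI_n - Ã)Ξ(s) = sI_n + Ã†. -/
open Matrix Polynomial

private lemma intertwine_pow {n m : ℕ} (C : Matrix (Fin n) (Fin m) ℂ) (k : ℕ) :
    C * (Cᴴ * C) ^ k = (C * Cᴴ) ^ k * C := by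
  induction k with
  | zero => simp
  | succ k ih =>
      rw [pow_succ, ← Matrix.mul_assoc, ih, pow_succ]
      simp [Matrix.mul_assoc]

private lemma intertwine {n m : ℕ} (C : Matrix (Fin n) (Fin m) ℂ) (p : Polynomial ℂ) :
    C * aeval (Cᴴ * C) p = aeval (C * Cᴴ) p * C := by
  induction p using Polynomial.induction_on' with
  | add p q hp hq => rw [map_add, map_add, Matrix.mul_add, Matrix.add_mul, hp, hq]
  | monomial k a =>
      simp only [aeval_monomial, Algebra.algebraMap_eq_smul_one, Matrix.smul_mul,
        Matrix.mul_smul, one_mul]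
      rw [intertwine_pow]

private lemma herm_aeval {n m : ℕ} (C : Matrix (Fin n) (Fin m) ℂ) (p : Polynomial ℝ) :
    (aeval (C * Cᴴ) (p.map (algebraMap ℝ ℂ)))ᴴ = aeval (C * Cᴴ) (p.map (algebraMap ℝ ℂ)) := by
  have hM : (C * Cᴴ)ᴴ = C * Cᴴ := by simp
  have hMk : ∀ k : ℕ, ((C * Cᴴ) ^ k)ᴴ = (C * Cᴴ) ^ k := by
    intro k
    induction k with
    | zero => simp
    | succ k ih => rw [pow_succ, conjTranspose_mul, hM, ih, ← pow_succ', pow_succ]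
  induction p using Polynomial.induction_on' with
  | add p q hp hq => simp only [Polynomial.map_add, map_add, conjTranspose_add, hp, hq]
  | monomial k a =>
      simp only [Polynomial.map_monomial, aeval_monomial, Algebra.algebraMap_eq_smul_one,
        Matrix.smul_mul, one_mul, conjTranspose_smul, hMk, star_smul, star_one]
      norm_cast

theorem transfer_function_commuting_case {n m : ℕ}
    (C : Matrix (Fin n) (Fin m) ℂ) (ε : Polynomial ℝ)
    (A : Matrix (Fin m) (Fin m) ℂ) (Atil : Matrix (Fin n) (Fin n) ℂ)
    (hA : A = -((1 / 2 : ℂ) • (Cᴴ * C)) -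
        Complex.I • (aeval (Cᴴ * C) (ε.map (algebraMap ℝ ℂ))))
    (hAtil : Atil = -((1 / 2 : ℂ) • (C * Cᴴ)) -
        Complex.I • (aeval (C * Cᴴ) (ε.map (algebraMap ℝ ℂ))))
    (s : ℂ)
    (hA_inv : IsUnit (s • (1 : Matrix (Fin m) (Fin m) ℂ) - A))
    (hAtil_inv : IsUnit (s • (1 : Matrix (Fin n) (Fin n) ℂ) - Atil)) :
    (s • (1 : Matrix (Fin n) (Fin n) ℂ) - Atil) *
        ((1 : Matrix (Fin n) (Fin n) ℂ) -
          C * (s • (1 : Matrix (Fin m) (Fin m) ℂ) - A)⁻¹ * Cᴴ) =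
      s • (1 : Matrix (Fin n) (Fin n) ℂ) + Atilᴴ := by
  set q := ε.map (algebraMap ℝ ℂ) with hq
  have hCA : C * A = Atil * C := by
    rw [hA, hAtil]
    simp only [Matrix.mul_sub, Matrix.sub_mul, Matrix.mul_neg, Matrix.neg_mul,
      Matrix.mul_smul, Matrix.smul_mul, intertwine C q, ← Matrix.mul_assoc]
  have hcomm : (s • (1 : Matrix (Fin n) (Fin n) ℂ) - Atil) * C
      = C * (s • (1 : Matrix (Fin m) (Fin m) ℂ) - A) := by
    rw [Matrix.sub_mul, Matrix.mul_sub, Matrix.smul_mul, Matrix.mul_smul,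
      Matrix.one_mul, Matrix.mul_one, hCA]
  have hinv : (s • (1 : Matrix (Fin m) (Fin m) ℂ) - A) *
      (s • (1 : Matrix (Fin m) (Fin m) ℂ) - A)⁻¹ = 1 :=
    Matrix.mul_nonsing_inv _ ((Matrix.isUnit_iff_isUnit_det _).mp hA_inv)
  have key : (s • (1 : Matrix (Fin n) (Fin n) ℂ) - Atil) *
      (C * (s • (1 : Matrix (Fin m) (Fin m) ℂ) - A)⁻¹) = C := by
    rw [← Matrix.mul_assoc, hcomm, Matrix.mul_assoc, hinv, Matrix.mul_one]
  have hAtilH : Atilᴴ = -Atil - C * Cᴴ := by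
    have hM : (C * Cᴴ)ᴴ = C * Cᴴ := by simp
    have h1 : star (1 / 2 : ℂ) = 1 / 2 := by norm_num
    have h2 : star Complex.I = -Complex.I := by
      rw [Complex.star_def, Complex.conj_I]
    rw [hAtil, conjTranspose_sub, conjTranspose_neg, conjTranspose_smul, conjTranspose_smul,
      herm_aeval, hM, h1, h2]
    module
  rw [Matrix.mul_sub, mul_one, ← Matrix.mul_assoc, key, hAtilH]
  abel
end

section
/- Let U = [[U11, U12],[U21, U22]] be a unitary operator (block matrix) on H1 ⊕ H2 and let X be a unitary operator on H2 such that I - X U22 is invertible. Then φ(X) = U11 + U12 (I - X U22)^{-1} X U21 is a unitary operator on H1. -/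
open Matrix

theorem mobius_transform_unitary {p q : ℕ}
    (U11 : Matrix (Fin p) (Fin p) ℂ) (U12 : Matrix (Fin p) (Fin q) ℂ)
    (U21 : Matrix (Fin q) (Fin p) ℂ) (U22 : Matrix (Fin q) (Fin q) ℂ)
    (hU : (fromBlocks U11 U12 U21 U22) * (fromBlocks U11 U12 U21 U22)ᴴ = 1 ∧
          (fromBlocks U11 U12 U21 U22)ᴴ * (fromBlocks U11 U12 U21 U22) = 1)
    (X : Matrix (Fin q) (Fin q) ℂ) (hX : X * Xᴴ = 1 ∧ Xᴴ * X = 1)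
    (hInv : IsUnit ((1 : Matrix (Fin q) (Fin q) ℂ) - X * U22)) :
    (U11 + U12 * ((1 : Matrix (Fin q) (Fin q) ℂ) - X * U22)⁻¹ * X * U21) *
      (U11 + U12 * ((1 : Matrix (Fin q) (Fin q) ℂ) - X * U22)⁻¹ * X * U21)ᴴ = 1 ∧
    (U11 + U12 * ((1 : Matrix (Fin q) (Fin q) ℂ) - X * U22)⁻¹ * X * U21)ᴴ *
      (U11 + U12 * ((1 : Matrix (Fin q) (Fin q) ℂ) - X * U22)⁻¹ * X * U21) = 1 := by
  obtain ⟨hU1, hU2⟩ := hU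
  obtain ⟨hX1, hX2⟩ := hX
  rw [fromBlocks_conjTranspose, fromBlocks_multiply, ← fromBlocks_one] at hU1 hU2
  obtain ⟨e1, e2, e3, e4⟩ := Matrix.fromBlocks_inj.mp hU1
  obtain ⟨f1, f2, f3, f4⟩ := Matrix.fromBlocks_inj.mp hU2
  have e1' : U11 * U11ᴴ = 1 - U12 * U12ᴴ := eq_sub_of_add_eq e1
  have e2' : U11 * U21ᴴ = -(U12 * U22ᴴ) := eq_neg_of_add_eq_zero_left e2
  have e3' : U21 * U11ᴴ = -(U22 * U12ᴴ) := eq_neg_of_add_eq_zero_left e3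
  have e4' : U21 * U21ᴴ = 1 - U22 * U22ᴴ := eq_sub_of_add_eq e4
  have f1' : U11ᴴ * U11 = 1 - U21ᴴ * U21 := eq_sub_of_add_eq f1
  have f2' : U11ᴴ * U12 = -(U21ᴴ * U22) := eq_neg_of_add_eq_zero_left f2
  have f3' : U12ᴴ * U11 = -(U22ᴴ * U21) := eq_neg_of_add_eq_zero_left f3
  have f4' : U12ᴴ * U12 = 1 - U22ᴴ * U22 := eq_sub_of_add_eq f4
  set Y := ((1 : Matrix (Fin q) (Fin q) ℂ) - X * U22)⁻¹ with hYdef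
  have hdet : IsUnit ((1 : Matrix (Fin q) (Fin q) ℂ) - X * U22).det :=
    (Matrix.isUnit_iff_isUnit_det _).mp hInv
  have hYB : Y * ((1 : Matrix (Fin q) (Fin q) ℂ) - X * U22) = 1 :=
    Matrix.nonsing_inv_mul _ hdet
  have hBY : ((1 : Matrix (Fin q) (Fin q) ℂ) - X * U22) * Y = 1 :=
    Matrix.mul_nonsing_inv _ hdet
  have hy1 : Y * (X * U22) = Y - 1 := by
    rw [mul_sub, mul_one] at hYB
    rw [eq_sub_iff_add_eq, ← hYB]; noncomm_ring
  have hy2 : (X * U22) * Y = Y - 1 := by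
    rw [sub_mul, one_mul] at hBY
    rw [eq_sub_iff_add_eq, ← hBY]; noncomm_ring
  have hz1 : (U22ᴴ * Xᴴ) * Yᴴ = Yᴴ - 1 := by
    have h := congrArg Matrix.conjTranspose hy1
    simpa [Matrix.conjTranspose_mul, Matrix.conjTranspose_sub,
      Matrix.conjTranspose_one, Matrix.mul_assoc] using h
  have hz2 : Yᴴ * (U22ᴴ * Xᴴ) = Yᴴ - 1 := by
    have h := congrArg Matrix.conjTranspose hy2
    simpa [Matrix.conjTranspose_mul, Matrix.conjTranspose_sub,
      Matrix.conjTranspose_one, Matrix.mul_assoc] using h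
  have hconj : (U11 + U12 * Y * X * U21)ᴴ = U11ᴴ + U21ᴴ * (Xᴴ * (Yᴴ * U12ᴴ)) := by
    simp [Matrix.conjTranspose_add, Matrix.conjTranspose_mul, Matrix.mul_assoc]
  constructor
  · rw [hconj]
    have h5 : X * (Xᴴ * Yᴴ) = Yᴴ := by rw [← Matrix.mul_assoc, hX1, Matrix.one_mul]
    calc (U11 + U12 * Y * X * U21) * (U11ᴴ + U21ᴴ * (Xᴴ * (Yᴴ * U12ᴴ)))
        = U11 * U11ᴴ + (U11 * U21ᴴ) * (Xᴴ * (Yᴴ * U12ᴴ)) + U12 * (Y * (X * (U21 * U11ᴴ)))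
            + U12 * (Y * (X * ((U21 * U21ᴴ) * (Xᴴ * (Yᴴ * U12ᴴ))))) := by
          simp only [Matrix.mul_add, Matrix.add_mul, Matrix.mul_sub, Matrix.sub_mul,
            Matrix.mul_one, Matrix.one_mul, Matrix.mul_assoc, Matrix.neg_mul, Matrix.mul_neg]
          abel
      _ = (1 - U12 * U12ᴴ) + (-(U12 * U22ᴴ)) * (Xᴴ * (Yᴴ * U12ᴴ)) + U12 * (Y * (X * (-(U22 * U12ᴴ))))
            + U12 * (Y * (X * ((1 - U22 * U22ᴴ) * (Xᴴ * (Yᴴ * U12ᴴ))))) := by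
          rw [e1', e2', e3', e4']
      _ = 1 - U12 * U12ᴴ - U12 * (((U22ᴴ * Xᴴ) * Yᴴ) * U12ᴴ) - U12 * ((Y * (X * U22)) * U12ᴴ)
            + U12 * ((Y * (X * (Xᴴ * Yᴴ))) * U12ᴴ)
            - U12 * ((Y * (X * U22)) * (((U22ᴴ * Xᴴ) * Yᴴ) * U12ᴴ)) := by
          simp only [Matrix.mul_add, Matrix.add_mul, Matrix.mul_sub, Matrix.sub_mul,
            Matrix.mul_one, Matrix.one_mul, Matrix.mul_assoc, Matrix.neg_mul, Matrix.mul_neg]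
          abel
      _ = 1 - U12 * U12ᴴ - U12 * ((Yᴴ - 1) * U12ᴴ) - U12 * ((Y - 1) * U12ᴴ)
            + U12 * ((Y * Yᴴ) * U12ᴴ) - U12 * ((Y - 1) * ((Yᴴ - 1) * U12ᴴ)) := by
          rw [hy1, hz1, h5]
      _ = 1 := by
          simp only [Matrix.mul_add, Matrix.add_mul, Matrix.mul_sub, Matrix.sub_mul,
            Matrix.mul_one, Matrix.one_mul, Matrix.mul_assoc, Matrix.neg_mul, Matrix.mul_neg]
          abel
  · rw [hconj]
    have g1 : U22 * Y = Xᴴ * (Y - 1) := by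
      calc U22 * Y = (Xᴴ * X) * (U22 * Y) := by rw [hX2, one_mul]
        _ = Xᴴ * ((X * U22) * Y) := by noncomm_ring
        _ = Xᴴ * (Y - 1) := by rw [hy2]
    have g2 : Yᴴ * U22ᴴ = (Yᴴ - 1) * X := by
      calc Yᴴ * U22ᴴ = (Yᴴ * U22ᴴ) * (Xᴴ * X) := by rw [hX2, mul_one]
        _ = (Yᴴ * (U22ᴴ * Xᴴ)) * X := by noncomm_ring
        _ = (Yᴴ - 1) * X := by rw [hz2]
    have h6 : X * (Xᴴ * (Y - 1)) = Y - 1 := by rw [← mul_assoc, hX1, one_mul]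
    calc (U11ᴴ + U21ᴴ * (Xᴴ * (Yᴴ * U12ᴴ))) * (U11 + U12 * Y * X * U21)
        = U11ᴴ * U11 + (U11ᴴ * U12) * (Y * (X * U21)) + U21ᴴ * (Xᴴ * (Yᴴ * (U12ᴴ * U11)))
            + U21ᴴ * (Xᴴ * (Yᴴ * ((U12ᴴ * U12) * (Y * (X * U21))))) := by
          simp only [Matrix.mul_add, Matrix.add_mul, Matrix.mul_sub, Matrix.sub_mul,
            Matrix.mul_one, Matrix.one_mul, Matrix.mul_assoc, Matrix.neg_mul, Matrix.mul_neg]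
          abel
      _ = (1 - U21ᴴ * U21) + (-(U21ᴴ * U22)) * (Y * (X * U21)) + U21ᴴ * (Xᴴ * (Yᴴ * (-(U22ᴴ * U21))))
            + U21ᴴ * (Xᴴ * (Yᴴ * ((1 - U22ᴴ * U22) * (Y * (X * U21))))) := by
          rw [f1', f2', f3', f4']
      _ = 1 - U21ᴴ * U21 - U21ᴴ * ((U22 * Y) * (X * U21)) - U21ᴴ * (Xᴴ * ((Yᴴ * U22ᴴ) * U21))
            + U21ᴴ * (Xᴴ * ((Yᴴ * Y) * (X * U21)))
            - U21ᴴ * (Xᴴ * ((Yᴴ * U22ᴴ) * ((U22 * Y) * (X * U21)))) := by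
          simp only [Matrix.mul_add, Matrix.add_mul, Matrix.mul_sub, Matrix.sub_mul,
            Matrix.mul_one, Matrix.one_mul, Matrix.mul_assoc, Matrix.neg_mul, Matrix.mul_neg]
          abel
      _ = 1 - U21ᴴ * U21 - U21ᴴ * ((Xᴴ * (Y - 1)) * (X * U21)) - U21ᴴ * (Xᴴ * (((Yᴴ - 1) * X) * U21))
            + U21ᴴ * (Xᴴ * ((Yᴴ * Y) * (X * U21)))
            - U21ᴴ * (Xᴴ * (((Yᴴ - 1) * X) * ((Xᴴ * (Y - 1)) * (X * U21)))) := by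
          rw [g1, g2]
      _ = 1 - U21ᴴ * U21 - U21ᴴ * (Xᴴ * ((Y - 1) * (X * U21)))
            - U21ᴴ * (Xᴴ * (((Yᴴ - 1) * (X * (Xᴴ * (Y - 1)))) * (X * U21)))
            - U21ᴴ * (Xᴴ * ((Yᴴ - 1) * (X * U21)))
            + U21ᴴ * (Xᴴ * ((Yᴴ * Y) * (X * U21))) := by
          simp only [Matrix.mul_add, Matrix.add_mul, Matrix.mul_sub, Matrix.sub_mul,
            Matrix.mul_one, Matrix.one_mul, Matrix.mul_assoc, Matrix.neg_mul, Matrix.mul_neg]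
          abel
      _ = 1 - U21ᴴ * U21 - U21ᴴ * (Xᴴ * ((Y - 1) * (X * U21)))
            - U21ᴴ * (Xᴴ * (((Yᴴ - 1) * (Y - 1)) * (X * U21)))
            - U21ᴴ * (Xᴴ * ((Yᴴ - 1) * (X * U21)))
            + U21ᴴ * (Xᴴ * ((Yᴴ * Y) * (X * U21))) := by
          rw [h6]
      _ = 1 - U21ᴴ * U21 + U21ᴴ * ((Xᴴ * X) * U21) := by
          simp only [Matrix.mul_add, Matrix.add_mul, Matrix.mul_sub, Matrix.sub_mul,
            Matrix.mul_one, Matrix.one_mul, Matrix.mul_assoc, Matrix.neg_mul, Matrix.mul_neg]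
          abel
      _ = 1 := by rw [hX2, Matrix.one_mul]; abel
end

section
/- Let S = [[S_ii, S_ie],[S_ei, S_ee]] be a unitary block matrix and η a unitary matrix of the same size as S_ii with η - S_ii invertible. Then S_red = S_ee + S_ei (η - S_ii)^{-1} S_ie is unitary. -/
open Matrix

/-- Pure ring-theoretic core: if the block identities hold, the reduced matrix
times its "transpose" equals one. All conjugate transposes are generalized to
fresh variables. -/
private lemma aux_red_core {ni ne : ℕ}
    (Sii Tii B C η θ : Matrix (Fin ni) (Fin ni) ℂ)
    (Sie Tei : Matrix (Fin ni) (Fin ne) ℂ)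
    (Sei Tie : Matrix (Fin ne) (Fin ni) ℂ)
    (See Tee : Matrix (Fin ne) (Fin ne) ℂ)
    (h1 : Sii * Tii + Sie * Tie = 1)
    (h2 : Sii * Tei + Sie * Tee = 0)
    (h3 : Sei * Tii + See * Tie = 0)
    (h4 : Sei * Tei + See * Tee = 1)
    (hη : η * θ = 1)
    (hBA : B * (η - Sii) = 1)
    (hAC : (θ - Tii) * C = 1) :
    (See + Sei * B * Sie) * (Tee + Tie * C * Tei) = 1 := by
  have e1 : Sie * Tie = 1 - Sii * Tii := by rw [← h1]; abel
  have e2 : Sie * Tee = -(Sii * Tei) := by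
    have : Sie * Tee = (Sii * Tei + Sie * Tee) - Sii * Tei := by abel
    rw [h2] at this; rw [this]; abel
  have e3 : See * Tie = -(Sei * Tii) := by
    have : See * Tie = (Sei * Tii + See * Tie) - Sei * Tii := by abel
    rw [h3] at this; rw [this]; abel
  have e4 : See * Tee = 1 - Sei * Tei := by rw [← h4]; abel
  have hM : (-1 : Matrix (Fin ni) (Fin ni) ℂ) - Tii * C - B * Sii
      + B * ((1 - Sii * Tii) * C) = 0 := by
    have inner : -((η - Sii) * (θ - Tii)) - (η - Sii) * Tii - Sii * (θ - Tii)
        + (1 - Sii * Tii) = 1 - η * θ := by noncomm_ring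
    have expand2 : B * (-((η - Sii) * (θ - Tii)) - (η - Sii) * Tii - Sii * (θ - Tii)
          + (1 - Sii * Tii)) * C
        = -((B * (η - Sii)) * ((θ - Tii) * C)) - (B * (η - Sii)) * (Tii * C)
          - (B * Sii) * ((θ - Tii) * C) + B * ((1 - Sii * Tii) * C) := by
      noncomm_ring
    rw [inner, hη, hBA, hAC] at expand2
    simp only [sub_self, Matrix.mul_zero, Matrix.zero_mul, Matrix.one_mul,
      Matrix.mul_one, one_mul, mul_one] at expand2
    exact expand2.symm
  calc (See + Sei * B * Sie) * (Tee + Tie * C * Tei)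
      = See * Tee + (See * Tie) * (C * Tei) + (Sei * B) * (Sie * Tee)
        + (Sei * B) * ((Sie * Tie) * (C * Tei)) := by
        simp only [Matrix.add_mul, Matrix.mul_add, Matrix.mul_sub, Matrix.sub_mul,
          Matrix.mul_neg, Matrix.neg_mul, Matrix.mul_one, Matrix.one_mul,
          Matrix.mul_assoc]
        abel
    _ = (1 - Sei * Tei) + (-(Sei * Tii)) * (C * Tei) + (Sei * B) * (-(Sii * Tei))
        + (Sei * B) * ((1 - Sii * Tii) * (C * Tei)) := by rw [e4, e3, e2, e1]
    _ = 1 + Sei * ((-1 : Matrix (Fin ni) (Fin ni) ℂ) - Tii * C - B * Sii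
        + B * ((1 - Sii * Tii) * C)) * Tei := by
        simp only [Matrix.add_mul, Matrix.mul_add, Matrix.mul_sub, Matrix.sub_mul,
          Matrix.mul_neg, Matrix.neg_mul, Matrix.mul_one, Matrix.one_mul,
          Matrix.mul_assoc]
        abel
    _ = 1 := by rw [hM]; simp

theorem reduced_scattering_unitary {ni ne : ℕ}
    (Sii : Matrix (Fin ni) (Fin ni) ℂ) (Sie : Matrix (Fin ni) (Fin ne) ℂ)
    (Sei : Matrix (Fin ne) (Fin ni) ℂ) (See : Matrix (Fin ne) (Fin ne) ℂ)
    (hS : (fromBlocks Sii Sie Sei See) * (fromBlocks Sii Sie Sei See)ᴴ = 1 ∧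
          (fromBlocks Sii Sie Sei See)ᴴ * (fromBlocks Sii Sie Sei See) = 1)
    (η : Matrix (Fin ni) (Fin ni) ℂ) (hη : η * ηᴴ = 1 ∧ ηᴴ * η = 1)
    (hInv : IsUnit (η - Sii)) :
    (See + Sei * (η - Sii)⁻¹ * Sie) * (See + Sei * (η - Sii)⁻¹ * Sie)ᴴ = 1 ∧
    (See + Sei * (η - Sii)⁻¹ * Sie)ᴴ * (See + Sei * (η - Sii)⁻¹ * Sie) = 1 := by
  have hdet : IsUnit (η - Sii).det := (Matrix.isUnit_iff_isUnit_det _).mp hInv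
  have hBA : (η - Sii)⁻¹ * (η - Sii) = 1 := Matrix.nonsing_inv_mul _ hdet
  have hAB : (η - Sii) * (η - Sii)⁻¹ = 1 := Matrix.mul_nonsing_inv _ hdet
  have hBAh : (ηᴴ - Siiᴴ) * ((η - Sii)⁻¹)ᴴ = 1 := by
    have := congrArg conjTranspose hBA
    simpa [conjTranspose_mul, conjTranspose_sub] using this
  have hABh : ((η - Sii)⁻¹)ᴴ * (ηᴴ - Siiᴴ) = 1 := by
    have := congrArg conjTranspose hAB
    simpa [conjTranspose_mul, conjTranspose_sub] using this
  have hrow := hS.1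
  have hcol := hS.2
  rw [fromBlocks_conjTranspose, fromBlocks_multiply, ← fromBlocks_one, fromBlocks_inj] at hrow
  rw [fromBlocks_conjTranspose, fromBlocks_multiply, ← fromBlocks_one, fromBlocks_inj] at hcol
  obtain ⟨r1, r2, r3, r4⟩ := hrow
  obtain ⟨c1, c2, c3, c4⟩ := hcol
  have hconj : (See + Sei * (η - Sii)⁻¹ * Sie)ᴴ
      = Seeᴴ + Sieᴴ * ((η - Sii)⁻¹)ᴴ * Seiᴴ := by
    simp [conjTranspose_add, conjTranspose_mul, Matrix.mul_assoc]
  constructor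
  · have h := aux_red_core Sii Siiᴴ ((η - Sii)⁻¹) (((η - Sii)⁻¹)ᴴ) η ηᴴ
      Sie Seiᴴ Sei Sieᴴ See Seeᴴ r1 r2 r3 r4 hη.1 hBA hBAh
    rw [hconj]
    exact h
  · have h := aux_red_core Siiᴴ Sii (((η - Sii)⁻¹)ᴴ) ((η - Sii)⁻¹) ηᴴ η
      Seiᴴ Sie Sieᴴ Sei Seeᴴ See c1 c2 c3 c4 hη.2 hABh hAB
    rw [hconj]
    exact h
end

section
/- Let S be a block unitary matrix with blocks S_ii, S_ie, S_ei, S_ee, η unitary with η - S_ii invertible, and let C_i, C_e be coupling matrices. Define S_red = S_ee + S_ei(η - S_ii)^{-1}S_ie and C_red = S_ei(η - S_ii)^{-1}C_i + C_e. Then C_red† S_red = C_i† η(η - S_ii)^{-1} S_ie + C_e† S_red; equivalently, C_i†[S_ie + S_ii(η - S_ii)^{-1}S_ie] + C_e†[S_ee + S_ei(η - S_ii)^{-1}S_ie] = C_red† S_red. -/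
open Matrix

theorem feedback_reduction_CdagS_identity {ni ne m : ℕ}
    (Sii : Matrix (Fin ni) (Fin ni) ℂ) (Sie : Matrix (Fin ni) (Fin ne) ℂ)
    (Sei : Matrix (Fin ne) (Fin ni) ℂ) (See : Matrix (Fin ne) (Fin ne) ℂ)
    (hS : (fromBlocks Sii Sie Sei See) * (fromBlocks Sii Sie Sei See)ᴴ = 1 ∧
          (fromBlocks Sii Sie Sei See)ᴴ * (fromBlocks Sii Sie Sei See) = 1)
    (η : Matrix (Fin ni) (Fin ni) ℂ) (hη : η * ηᴴ = 1 ∧ ηᴴ * η = 1)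
    (hInv : IsUnit (η - Sii))
    (Ci : Matrix (Fin ni) (Fin m) ℂ) (Ce : Matrix (Fin ne) (Fin m) ℂ)
    (Sred : Matrix (Fin ne) (Fin ne) ℂ) (Cred : Matrix (Fin ne) (Fin m) ℂ)
    (hSred : Sred = See + Sei * (η - Sii)⁻¹ * Sie)
    (hCred : Cred = Sei * (η - Sii)⁻¹ * Ci + Ce) :
    Credᴴ * Sred = Ciᴴ * η * (η - Sii)⁻¹ * Sie + Ceᴴ * Sred ∧
    Ciᴴ * (Sie + Sii * (η - Sii)⁻¹ * Sie) +
        Ceᴴ * (See + Sei * (η - Sii)⁻¹ * Sie) = Credᴴ * Sred := by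
  obtain ⟨hS1, hS2⟩ := hS
  have hdet : IsUnit (η - Sii).det := (Matrix.isUnit_iff_isUnit_det _).mp hInv
  have hA1 : (η - Sii) * (η - Sii)⁻¹ = 1 := Matrix.mul_nonsing_inv _ hdet
  have hA2 : (η - Sii)⁻¹ * (η - Sii) = 1 := Matrix.nonsing_inv_mul _ hdet
  rw [fromBlocks_conjTranspose, fromBlocks_multiply, ← fromBlocks_one] at hS2
  have h11 : Siiᴴ * Sii + Seiᴴ * Sei = 1 := by
    have := congrArg Matrix.toBlocks₁₁ hS2; simpa only [Matrix.toBlocks_fromBlocks₁₁] using this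
  have h12 : Siiᴴ * Sie + Seiᴴ * See = 0 := by
    have := congrArg Matrix.toBlocks₁₂ hS2; simpa only [Matrix.toBlocks_fromBlocks₁₂] using this
  have e1 : Seiᴴ * See = -(Siiᴴ * Sie) := eq_neg_of_add_eq_zero_right h12
  have e2 : Seiᴴ * Sei = 1 - Siiᴴ * Sii := eq_sub_of_add_eq' h11
  have hkey0 : Sie + Sii * ((η - Sii)⁻¹ * Sie) = η * ((η - Sii)⁻¹ * Sie) := by
    have h : (η - Sii) * ((η - Sii)⁻¹ * Sie) = Sie := by
      rw [← Matrix.mul_assoc, hA1, Matrix.one_mul]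
    rw [Matrix.sub_mul] at h
    exact (sub_eq_iff_eq_add.mp h).symm
  have hSei : Seiᴴ * Sred = (η - Sii)ᴴ * (η * ((η - Sii)⁻¹ * Sie)) := by
    have rhs : (η - Sii)ᴴ * (η * ((η - Sii)⁻¹ * Sie)) =
        (η - Sii)⁻¹ * Sie - Siiᴴ * (Sie + Sii * ((η - Sii)⁻¹ * Sie)) := by
      rw [conjTranspose_sub, Matrix.sub_mul, ← Matrix.mul_assoc ηᴴ η, hη.2,
        Matrix.one_mul, ← hkey0]
    rw [rhs, hSred, Matrix.mul_add, e1,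
      show Seiᴴ * (Sei * (η - Sii)⁻¹ * Sie) = Seiᴴ * Sei * ((η - Sii)⁻¹ * Sie) from by
        simp only [Matrix.mul_assoc], e2]
    simp only [Matrix.sub_mul, Matrix.one_mul, Matrix.mul_add, Matrix.mul_assoc]
    abel
  have hAinvH : ((η - Sii)⁻¹)ᴴ * (η - Sii)ᴴ = 1 := by
    rw [← conjTranspose_mul, hA1, conjTranspose_one]
  have main1 : Credᴴ * Sred = Ciᴴ * η * (η - Sii)⁻¹ * Sie + Ceᴴ * Sred := by
    rw [hCred, conjTranspose_add, conjTranspose_mul, conjTranspose_mul, Matrix.add_mul]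
    congr 1
    calc Ciᴴ * ((η - Sii)⁻¹ᴴ * Seiᴴ) * Sred
        = Ciᴴ * ((η - Sii)⁻¹ᴴ * (Seiᴴ * Sred)) := by
          simp only [Matrix.mul_assoc]
      _ = Ciᴴ * ((η - Sii)⁻¹ᴴ * ((η - Sii)ᴴ * (η * ((η - Sii)⁻¹ * Sie)))) := by rw [hSei]
      _ = Ciᴴ * η * (η - Sii)⁻¹ * Sie := by
          rw [← Matrix.mul_assoc ((η - Sii)⁻¹ᴴ), hAinvH, Matrix.one_mul]
          simp only [Matrix.mul_assoc]
  refine ⟨main1, ?_⟩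
  rw [main1, ← hSred]
  congr 1
  rw [Matrix.mul_assoc Sii, hkey0]
  simp only [Matrix.mul_assoc]
end

section
/- Let S_ii be a square complex matrix and η a unitary matrix of the same size with η - S_ii invertible, and suppose S_ii†S_ii + S_ei†S_ei = I for some matrix S_ei. Then I + 2 S_ii(η - S_ii)^{-1} - (η† - S_ii†)^{-1} S_ei† S_ei (η - S_ii)^{-1} = 2i·Im{ S_ii(η - S_ii)^{-1} }, where Im{M} = (M - M†)/(2i). -/
open Matrix

theorem feedback_X_identity {ni ne : ℕ}
    (Sii : Matrix (Fin ni) (Fin ni) ℂ) (Sei : Matrix (Fin ne) (Fin ni) ℂ)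
    (η : Matrix (Fin ni) (Fin ni) ℂ) (hη : η * ηᴴ = 1 ∧ ηᴴ * η = 1)
    (hInv : IsUnit (η - Sii))
    (hiso : Siiᴴ * Sii + Seiᴴ * Sei = 1) :
    (1 : Matrix (Fin ni) (Fin ni) ℂ) + 2 • (Sii * (η - Sii)⁻¹) -
        (ηᴴ - Siiᴴ)⁻¹ * Seiᴴ * Sei * (η - Sii)⁻¹ =
      (2 * Complex.I) •
        ((2 * Complex.I)⁻¹ •
          (Sii * (η - Sii)⁻¹ - (Sii * (η - Sii)⁻¹)ᴴ)) := by
  obtain ⟨hη1, hη2⟩ := hη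
  have hdet : IsUnit (η - Sii).det := (Matrix.isUnit_iff_isUnit_det _).mp hInv
  have h1 : (η - Sii) * (η - Sii)⁻¹ = 1 := Matrix.mul_nonsing_inv _ hdet
  have h2 : (η - Sii)⁻¹ * (η - Sii) = 1 := Matrix.nonsing_inv_mul _ hdet
  have hAH : ηᴴ - Siiᴴ = (η - Sii)ᴴ := by
    rw [Matrix.conjTranspose_sub]
  have hinvH : ((η - Sii)ᴴ)⁻¹ = ((η - Sii)⁻¹)ᴴ :=
    (Matrix.conjTranspose_nonsing_inv _).symm
  have h4 : ((η - Sii)ᴴ)⁻¹ * (η - Sii)ᴴ = 1 := by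
    rw [hinvH, ← Matrix.conjTranspose_mul, h1, Matrix.conjTranspose_one]
  have hse : Seiᴴ * Sei = 1 - Siiᴴ * Sii := by
    rw [← hiso]; abel
  have key : Seiᴴ * Sei =
      (η - Sii)ᴴ * (η - Sii) + (η - Sii)ᴴ * Sii + Siiᴴ * (η - Sii) := by
    rw [hse, Matrix.conjTranspose_sub, Matrix.sub_mul, Matrix.sub_mul,
      Matrix.mul_sub, Matrix.mul_sub, hη2]
    abel
  have hsmul : (2 * Complex.I) • ((2 * Complex.I)⁻¹ •
      (Sii * (η - Sii)⁻¹ - (Sii * (η - Sii)⁻¹)ᴴ))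
      = Sii * (η - Sii)⁻¹ - (Sii * (η - Sii)⁻¹)ᴴ := by
    rw [smul_smul, mul_inv_cancel₀ (by simp [Complex.I_ne_zero]), one_smul]
  rw [hsmul, hAH]
  have hMH : (Sii * (η - Sii)⁻¹)ᴴ = ((η - Sii)ᴴ)⁻¹ * Siiᴴ := by
    rw [Matrix.conjTranspose_mul, hinvH]
  have hbig : ((η - Sii)ᴴ)⁻¹ * Seiᴴ * Sei * (η - Sii)⁻¹
      = 1 + Sii * (η - Sii)⁻¹ + ((η - Sii)ᴴ)⁻¹ * Siiᴴ := by
    rw [Matrix.mul_assoc, Matrix.mul_assoc, ← Matrix.mul_assoc Seiᴴ, key]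
    rw [Matrix.add_mul, Matrix.add_mul, Matrix.mul_add, Matrix.mul_add]
    simp only [← Matrix.mul_assoc]
    rw [h4, Matrix.one_mul, h1, Matrix.one_mul,
      Matrix.mul_assoc ((η - Sii)ᴴ⁻¹ * Siiᴴ) (η - Sii) (η - Sii)⁻¹,
      h1, Matrix.mul_one]
  rw [hbig, hMH, two_smul]
  abel
end

section
/- Stratonovich–Itô conversion for the Hamiltonian: let E ∈ ℂ^{n×n} Hermitian with I + (i/2)E invertible, F ∈ ℂ^{n×1} (or n×m), K = K† , and define S = (I-(i/2)E)(I+(i/2)E)^{-1}, L = -i(I+(i/2)E)^{-1}F. If -(1/2)L†L - iH = -iK - (i/2)F†L, then H = K + (1/2)·Im{F†(I+(i/2)E)^{-1}F} and H is Hermitian, where Im{M} = (M - M†)/(2i). -/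
open Matrix

theorem stratonovich_ito_hamiltonian {n m : ℕ}
    (E : Matrix (Fin n) (Fin n) ℂ) (hE : Eᴴ = E)
    (hInv : IsUnit ((1 : Matrix (Fin n) (Fin n) ℂ) + (Complex.I / 2) • E))
    (F : Matrix (Fin n) (Fin m) ℂ)
    (K H : Matrix (Fin m) (Fin m) ℂ) (hK : Kᴴ = K)
    (L : Matrix (Fin n) (Fin m) ℂ)
    (hL : L = -(Complex.I • (((1 : Matrix (Fin n) (Fin n) ℂ) + (Complex.I / 2) • E)⁻¹ * F)))
    (hEq : -((1 / 2 : ℂ) • (Lᴴ * L)) - Complex.I • H =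
        -(Complex.I • K) - (Complex.I / 2) • (Fᴴ * L)) :
    H = K + (1 / 2 : ℂ) •
        ((2 * Complex.I)⁻¹ •
          (Fᴴ * ((1 : Matrix (Fin n) (Fin n) ℂ) + (Complex.I / 2) • E)⁻¹ * F -
            (Fᴴ * ((1 : Matrix (Fin n) (Fin n) ℂ) + (Complex.I / 2) • E)⁻¹ * F)ᴴ)) ∧
      Hᴴ = H := by
  set A : Matrix (Fin n) (Fin n) ℂ := 1 + (Complex.I / 2) • E with hA
  have hAdet : IsUnit A.det := (Matrix.isUnit_iff_isUnit_det A).mp hInv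
  have hAH : Aᴴ = 1 - (Complex.I / 2) • E := by
    rw [hA, Matrix.conjTranspose_add, Matrix.conjTranspose_smul, hE,
      Matrix.conjTranspose_one]
    have : star (Complex.I / 2) = -(Complex.I / 2) := by
      simp [Complex.star_def, map_div₀, Complex.conj_I, neg_div]
    rw [this, neg_smul, sub_eq_add_neg]
  have hAHdet : IsUnit Aᴴ.det := by
    rw [Matrix.det_conjTranspose]; exact hAdet.star
  set B : Matrix (Fin n) (Fin n) ℂ := A⁻¹ with hB
  have hBH : Bᴴ = Aᴴ⁻¹ := by rw [hB, Matrix.conjTranspose_nonsing_inv]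
  have h2' : (1 / 2 : ℂ) • (A + Aᴴ) = 1 := by
    rw [hA, hAH]; module
  have key : Bᴴ * B = (1 / 2 : ℂ) • (B + Bᴴ) := by
    calc Bᴴ * B = Bᴴ * ((1 / 2 : ℂ) • (A + Aᴴ)) * B := by
          rw [h2', Matrix.mul_one]
      _ = (1 / 2 : ℂ) • (Bᴴ * (A * B) + Bᴴ * Aᴴ * B) := by
          rw [Matrix.mul_smul, Matrix.smul_mul, Matrix.mul_add, Matrix.add_mul,
            Matrix.mul_assoc]
      _ = (1 / 2 : ℂ) • (B + Bᴴ) := by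
          rw [hB, Matrix.mul_nonsing_inv A hAdet, Matrix.mul_one, ← hB, hBH,
            Matrix.nonsing_inv_mul Aᴴ hAHdet, Matrix.one_mul, ← hBH, add_comm]
  set M : Matrix (Fin m) (Fin m) ℂ := Fᴴ * B * F with hM
  set N : Matrix (Fin m) (Fin m) ℂ := Fᴴ * Bᴴ * F with hN
  have hMN : Mᴴ = N := by
    rw [hM, hN, Matrix.conjTranspose_mul, Matrix.conjTranspose_mul,
      Matrix.conjTranspose_conjTranspose, Matrix.mul_assoc]
  have hNM : Nᴴ = M := by
    rw [hN, hM, Matrix.conjTranspose_mul, Matrix.conjTranspose_mul,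
      Matrix.conjTranspose_conjTranspose, Matrix.conjTranspose_conjTranspose,
      Matrix.mul_assoc]
  have hFL : Fᴴ * L = -(Complex.I • M) := by
    rw [hL, hM, Matrix.mul_neg, Matrix.mul_smul, Matrix.mul_assoc]
  have hLH : Lᴴ = Complex.I • (Fᴴ * Bᴴ) := by
    rw [hL, Matrix.conjTranspose_neg, Matrix.conjTranspose_smul,
      Matrix.conjTranspose_mul, Complex.star_def, Complex.conj_I, neg_smul, neg_neg]
  have hLL : Lᴴ * L = (1 / 2 : ℂ) • (M + N) := by
    rw [hLH, hL, Matrix.mul_neg, Matrix.smul_mul, Matrix.mul_smul, smul_smul,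
      Complex.I_mul_I, neg_smul, neg_neg, one_smul]
    calc Fᴴ * Bᴴ * (B * F) = Fᴴ * (Bᴴ * B) * F := by
          rw [Matrix.mul_assoc, Matrix.mul_assoc, Matrix.mul_assoc]
      _ = (1 / 2 : ℂ) • (M + N) := by
          rw [key, Matrix.mul_smul, Matrix.smul_mul, Matrix.mul_add,
            Matrix.add_mul, hM, hN]
  -- solve for H
  have h4 : Complex.I • H =
      -(-((1 / 2 : ℂ) • (Lᴴ * L)) - Complex.I • H) - (1 / 2 : ℂ) • (Lᴴ * L) := by
    abel
  rw [hEq] at h4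
  have h5 : H = (-Complex.I) • (Complex.I • H) := by
    rw [smul_smul]
    simp [Complex.I_mul_I]
  rw [h4, hFL, hLL] at h5
  have hinv2I : ((2 : ℂ) * Complex.I)⁻¹ = -(Complex.I) / 2 := by
    rw [eq_div_iff (two_ne_zero), inv_mul_eq_div, div_eq_iff (by simp [Complex.I_ne_zero] : (2:ℂ) * Complex.I ≠ 0)]
    ring_nf
    simp [Complex.I_sq]
  constructor
  · rw [hMN, hinv2I, h5]
    match_scalars <;> (first | ring1 | linear_combination (Complex.I/2) * Complex.I_sq | linear_combination (-(Complex.I)/2) * Complex.I_sq | (simp [Complex.I_sq, Complex.conj_ofNat]; try ring))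
  · have hClean : H = K - (Complex.I / 4) • (M - N) := by
      rw [h5]; match_scalars <;> (first | ring1 | linear_combination (Complex.I/2) * Complex.I_sq | linear_combination (-(Complex.I)/2) * Complex.I_sq | (simp [Complex.I_sq, Complex.conj_ofNat]; try ring))
    rw [hClean, Matrix.conjTranspose_sub, Matrix.conjTranspose_smul,
      Matrix.conjTranspose_sub, hK, hMN, hNM, Complex.star_def, map_div₀,
      Complex.conj_I]
    match_scalars <;> (first | ring1 | linear_combination (Complex.I/2) * Complex.I_sq | linear_combination (-(Complex.I)/2) * Complex.I_sq | (simp [Complex.I_sq, Complex.conj_ofNat]; try ring))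
end
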